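/- Every symmetric square matrix A over ℚ can be written as A = Bᵀ V⁻¹ B where B is an m×n integer matrix and V is a symmetric nonsingular m×m integer matrix (for some m). -/

import Mathlib

open Matrix

private lemma exists_int_mul_of_den_dvd (q : ℚ) (d : ℕ) (h : q.den ∣ d) :
    ∃ z : ℤ, (z : ℚ) = q * d := by
  obtain ⟨k, hk⟩ := h
  refine ⟨q.num * k, ?_⟩
  have hden : (q.den : ℚ) ≠ 0 := by exact_mod_cast q.den_ne_zero
  have hq : q * (q.den : ℚ) = q.num := by
    nth_rewrite 1 [← Rat.num_div_den q]
    exact div_mul_cancel₀ _ hden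
  rw [hk]
  push_cast
  rw [← mul_assoc, hq]

/-- every symmetric square matrix `A` over `ℚ` can be written as
`A = Bᵀ V⁻¹ B` with `B` an `m×n` integer matrix and `V` a symmetric nonsingular `m×m`
integer matrix, for some `m`. -/
theorem symmetric_rational_matrix_factorization {n : ℕ}
    (A : Matrix (Fin n) (Fin n) ℚ) (hA : A.IsSymm) :
    ∃ (m : ℕ) (B : Matrix (Fin m) (Fin n) ℤ) (V : Matrix (Fin m) (Fin m) ℤ),
      V.IsSymm ∧ V.det ≠ 0 ∧
      A = (B.map fun z => (z : ℚ)).transpose * (V.map fun z => (z : ℚ))⁻¹ *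
        (B.map fun z => (z : ℚ)) := by
  classical
  -- common denominator
  set d : ℕ := ∏ p : Fin n × Fin n, (A p.1 p.2).den with hd_def
  have hd_pos : 0 < d := Finset.prod_pos (fun p _ => (A p.1 p.2).pos)
  have hd0 : (d : ℚ) ≠ 0 := by exact_mod_cast hd_pos.ne'
  have hdvd : ∀ i j, (A i j).den ∣ d := fun i j =>
    Finset.dvd_prod_of_mem (fun p : Fin n × Fin n => (A p.1 p.2).den)
      (Finset.mem_univ (i, j))
  -- integer matrix M with (M : ℚ) = d • A
  have hM' : ∀ i j, ∃ z : ℤ, (z : ℚ) = A i j * d := fun i j =>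
    exists_int_mul_of_den_dvd _ d (hdvd i j)
  choose M hM using hM'
  have hMq : (Matrix.of M).map (fun z : ℤ => (z : ℚ)) = (d : ℚ) • A := by
    ext i j
    simp [hM i j, mul_comm]
  have hMsymm : (Matrix.of M)ᵀ = Matrix.of M := by
    ext i j
    have hA' : A j i = A i j := (congrFun (congrFun hA i) j)
    have h2 : ((M j i : ℚ)) = (M i j : ℚ) := by rw [hM, hM, hA']
    exact_mod_cast h2
  -- block matrices over Fin n ⊕ Fin n
  set V' : Matrix (Fin n ⊕ Fin n) (Fin n ⊕ Fin n) ℤ :=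
    fromBlocks 0 ((d : ℤ) • 1) ((d : ℤ) • 1) (-((d : ℤ) • Matrix.of M)) with hV'
  set B' : Matrix (Fin n ⊕ Fin n) (Fin n) ℤ := fromRows 1 0 with hB'
  have hV'symm : V'ᵀ = V' := by
    rw [hV', fromBlocks_transpose, transpose_zero, transpose_smul, transpose_one,
      transpose_neg, transpose_smul, hMsymm]
  -- rational versions
  set Vq : Matrix (Fin n ⊕ Fin n) (Fin n ⊕ Fin n) ℚ :=
    V'.map (fun z : ℤ => (z : ℚ)) with hVq
  have hVqeq : Vq = fromBlocks 0 ((d : ℚ) • 1) ((d : ℚ) • 1)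
      (-((d : ℚ) • ((d : ℚ) • A))) := by
    rw [hVq, hV']
    ext (i | i) (j | j) <;>
      simp only [Matrix.map_apply, Matrix.fromBlocks_apply₁₁, Matrix.fromBlocks_apply₁₂,
        Matrix.fromBlocks_apply₂₁, Matrix.fromBlocks_apply₂₂, Matrix.smul_apply,
        Matrix.one_apply, Matrix.zero_apply, Matrix.neg_apply, Matrix.of_apply,
        smul_eq_mul, mul_ite, mul_one, mul_zero, Int.cast_zero, Int.cast_neg,
        Int.cast_mul, Int.cast_natCast, Int.cast_ite, Int.cast_one, hM]
    · ring
  set W : Matrix (Fin n ⊕ Fin n) (Fin n ⊕ Fin n) ℚ :=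
    fromBlocks A ((d : ℚ)⁻¹ • 1) ((d : ℚ)⁻¹ • 1) 0 with hW
  have h11 : (0 : Matrix (Fin n) (Fin n) ℚ) * A + ((d : ℚ) • 1) * ((d : ℚ)⁻¹ • 1) = 1 := by
    simp [Matrix.smul_mul, Matrix.mul_smul, smul_smul, hd0]
  have h12 : (0 : Matrix (Fin n) (Fin n) ℚ) * ((d : ℚ)⁻¹ • 1) + ((d : ℚ) • 1) * 0 = 0 := by
    simp
  have h21 : ((d : ℚ) • 1) * A + (-((d : ℚ) • ((d : ℚ) • A))) * ((d : ℚ)⁻¹ • 1) = 0 := by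
    rw [Matrix.neg_mul, Matrix.smul_mul, Matrix.smul_mul, Matrix.mul_smul, Matrix.one_mul,
      Matrix.mul_one, smul_smul, smul_smul, mul_inv_cancel₀ hd0, one_mul]
    simp
  have h22 : ((d : ℚ) • 1) * ((d : ℚ)⁻¹ • 1) + (-((d : ℚ) • ((d : ℚ) • A))) * 0 = 1 := by
    simp [Matrix.smul_mul, Matrix.mul_smul, smul_smul, hd0]
  have hVW : Vq * W = 1 := by
    rw [hVqeq, hW, fromBlocks_multiply, h11, h12, h21, h22, fromBlocks_one]
  have hVinv : Vq⁻¹ = W := inv_eq_right_inv hVW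
  -- determinant nonzero
  have hdetq : Vq.det ≠ 0 := (Matrix.isUnit_det_of_right_inverse hVW).ne_zero
  have hdetmap : Vq.det = ((V'.det : ℤ) : ℚ) := by
    rw [hVq]
    exact (RingHom.map_det (Int.castRingHom ℚ) V').symm
  have hdet : V'.det ≠ 0 := by
    intro h
    apply hdetq
    rw [hdetmap, h, Int.cast_zero]
  -- core identity over the sum type
  set Bq : Matrix (Fin n ⊕ Fin n) (Fin n) ℚ :=
    B'.map (fun z : ℤ => (z : ℚ)) with hBq
  have hBqeq : Bq = fromRows 1 0 := by
    rw [hBq, hB']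
    ext (i | i) j <;> simp [Matrix.fromRows_apply_inl, Matrix.fromRows_apply_inr, Matrix.map_apply, Matrix.one_apply]
  have hcore : Bqᵀ * W * Bq = A := by
    rw [hBqeq, hW, transpose_fromRows, transpose_one, transpose_zero,
      fromCols_mul_fromBlocks, fromCols_mul_fromRows]
    simp
  -- transfer to Fin (n + n)
  refine ⟨n + n, (reindex finSumFinEquiv (Equiv.refl (Fin n))) B',
    (reindex finSumFinEquiv finSumFinEquiv) V', ?_, ?_, ?_⟩
  · show _ = _
    rw [transpose_reindex, hV'symm]
  · rw [det_reindex_self]; exact hdet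
  · have hBmap : ((reindex finSumFinEquiv (Equiv.refl (Fin n))) B').map
        (fun z : ℤ => (z : ℚ)) = (reindex finSumFinEquiv (Equiv.refl (Fin n))) Bq := by
      rw [hBq]; ext i j; simp [reindex_apply, Matrix.submatrix_map]
    have hVmap : ((reindex finSumFinEquiv finSumFinEquiv) V').map
        (fun z : ℤ => (z : ℚ)) = (reindex finSumFinEquiv finSumFinEquiv) Vq := by
      rw [hVq]; ext i j; simp [reindex_apply, Matrix.submatrix_map]
    rw [hBmap, hVmap]
    have hVmapinv : ((reindex finSumFinEquiv finSumFinEquiv) Vq)⁻¹ =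
        (reindex finSumFinEquiv finSumFinEquiv) W := by
      apply inv_eq_right_inv
      rw [reindex_apply, reindex_apply, submatrix_mul_equiv, hVW]
      ext i j
      simp [Matrix.one_apply]
    rw [hVmapinv]
    simp only [reindex_apply]
    rw [transpose_submatrix, submatrix_mul_equiv, submatrix_mul_equiv, hcore]
    ext i j
    simp
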